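/- Let c and d be monotonic cost functions. A Δ⁰₂ set A obeys both c and d if and only if A obeys the cost function c + d. -/

import Mathlib

/-- A cost function: computable and nonnegative. -/
def IsCostFunction (c : ℕ → ℕ → ℚ) : Prop :=
  Computable₂ c ∧ ∀ x s, 0 ≤ c x s

/-- The cost of the change from stage `s-1` to stage `s`: `c x s` for the least
`x < s` that changes, and `0` if there is no such `x`. -/
def stageCost (c : ℕ → ℕ → ℚ) (A : ℕ → ℕ → Bool) (s : ℕ) : ℚ :=
  if h : ∃ x, x < s ∧ A (s - 1) x ≠ A s x then c (Nat.find h) s else 0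

/-- `A` is a computable approximation of the set `L`: a computable sequence of
finite sets converging pointwise to `L`. -/
def IsCompApprox (A : ℕ → ℕ → Bool) (L : ℕ → Bool) : Prop :=
  Computable₂ A ∧ (∀ s, Set.Finite {x | A s x = true}) ∧
    ∀ x, ∃ N, ∀ s, N ≤ s → A s x = L x

/-- The total cost of the approximation `A` is bounded by `q`. -/
def ObeysWith (c : ℕ → ℕ → ℚ) (A : ℕ → ℕ → Bool) (q : ℚ) : Prop :=
  ∀ n, ∑ s ∈ Finset.range n, stageCost c A s ≤ q

/-- A (Δ⁰₂) set `L` obeys the cost function `c`. -/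
def Obeys (c : ℕ → ℕ → ℚ) (L : ℕ → Bool) : Prop :=
  ∃ A, IsCompApprox A L ∧ ∃ q, ObeysWith c A q

/-- Monotonic: non-increasing in the main argument, zero for `x > s`,
non-decreasing in the stage. -/
def MonotonicCF (c : ℕ → ℕ → ℚ) : Prop :=
  (∀ x s, c (x + 1) s ≤ c x s) ∧ (∀ x s, s < x → c x s = 0) ∧
    ∀ x s, c x s ≤ c x (s + 1)

/-- The limit condition: `lim_x liminf_s c(x,s) = 0`. -/
def LimitCondition (c : ℕ → ℕ → ℚ) : Prop :=
  ∀ e : ℕ, ∃ x0, ∀ x, x0 ≤ x → ∀ t, ∃ s, t ≤ s ∧ c x s ≤ ((2 : ℚ) ^ e)⁻¹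

/-- `L` is computably enumerable. -/
def CEset (L : ℕ → Bool) : Prop :=
  ∃ f : ℕ →. Unit, Partrec f ∧ ∀ x, (f x).Dom ↔ L x = true

theorem computable_nat_find {α : Type*} [Primcodable α] {p : α → ℕ → Bool}
    (hp : Computable₂ p) (H : ∀ a, ∃ n, p a n = true) :
    Computable fun a => Nat.find (H a) := by
  have h1 : Partrec fun a => Nat.rfind fun n => ((p a n : Bool) : Part Bool) :=
    Partrec.rfind hp.partrec₂
  refine h1.of_eq_tot fun a => ?_
  refine Nat.mem_rfind.mpr ?_
  constructor
  · exact Part.mem_some_iff.mpr (Nat.find_spec (H a)).symm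
  · intro m hm
    exact Part.mem_some_iff.mpr (Bool.eq_false_iff.mpr (Nat.find_min (H a) hm)).symm

/-- `true` iff `B t` and `C t` agree on all `x ≤ i`. -/
def agreeUp (B C : ℕ → ℕ → Bool) (i t : ℕ) : Bool :=
  Nat.rec (B t 0 == C t 0) (fun x IH => IH && (B t (x + 1) == C t (x + 1))) i

theorem agreeUp_eq_true {B C : ℕ → ℕ → Bool} {i t : ℕ} :
    agreeUp B C i t = true ↔ ∀ x ≤ i, B t x = C t x := by
  induction i with
  | zero =>
    show (B t 0 == C t 0) = true ↔ _
    simp [Nat.le_zero]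
  | succ i ih =>
    show (agreeUp B C i t && (B t (i + 1) == C t (i + 1))) = true ↔ _
    rw [Bool.and_eq_true, ih, beq_iff_eq]
    constructor
    · rintro ⟨h1, h2⟩ x hx
      rcases eq_or_lt_of_le hx with h | h
      · rw [h]; exact h2
      · exact h1 x (Nat.lt_succ_iff.mp h)
    · intro h
      exact ⟨fun x hx => h x (hx.trans (Nat.le_succ i)), h _ le_rfl⟩

theorem agreeUp_computable {B C : ℕ → ℕ → Bool} (hB : Computable₂ B) (hC : Computable₂ C) :
    Computable₂ (agreeUp B C) := by
  have hg : Computable fun a : ℕ × ℕ => (B a.2 0 == C a.2 0) :=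
    Primrec.beq.to_comp.comp (hB.comp Computable.snd (Computable.const 0))
      (hC.comp Computable.snd (Computable.const 0))
  have hh : Computable₂ fun (a : ℕ × ℕ) (z : ℕ × Bool) =>
      (z.2 && (B a.2 (z.1 + 1) == C a.2 (z.1 + 1))) := by
    have h1 : Computable fun w : (ℕ × ℕ) × ℕ × Bool => w.2.2 :=
      Computable.snd.comp Computable.snd
    have h2 : Computable fun w : (ℕ × ℕ) × ℕ × Bool => (B w.1.2 (w.2.1 + 1) == C w.1.2 (w.2.1 + 1)) :=
      Primrec.beq.to_comp.comp
        (hB.comp (Computable.snd.comp Computable.fst)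
          (Computable.succ.comp (Computable.fst.comp Computable.snd)))
        (hC.comp (Computable.snd.comp Computable.fst)
          (Computable.succ.comp (Computable.fst.comp Computable.snd)))
    exact Primrec.and.to_comp.comp h1 h2
  exact (Computable.nat_rec Computable.fst hg hh).of_eq fun a => rfl

/-- search predicate: stage `t` is past `a.1` and has agreement up to `a.2`. -/
def stgP (B C : ℕ → ℕ → Bool) (a : ℕ × ℕ) (t : ℕ) : Bool :=
  decide (a.1 < t) && agreeUp B C a.2 t

theorem stgP_computable {B C : ℕ → ℕ → Bool} (hB : Computable₂ B) (hC : Computable₂ C) :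
    Computable₂ (stgP B C) := by
  have h1 : Computable fun w : (ℕ × ℕ) × ℕ => decide (w.1.1 < w.2) :=
    Primrec.nat_lt.decide.to_comp.comp (Computable.fst.comp Computable.fst) Computable.snd
  have h2 : Computable fun w : (ℕ × ℕ) × ℕ => agreeUp B C w.1.2 w.2 :=
    (agreeUp_computable hB hC).comp (Computable.snd.comp Computable.fst) Computable.snd
  exact Primrec.and.to_comp.comp h1 h2

/-- The sequence of agreement stages. -/
def stg (B C : ℕ → ℕ → Bool) (H : ∀ a : ℕ × ℕ, ∃ t, stgP B C a t = true) : ℕ → ℕ :=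
  fun i => Nat.rec (Nat.find (H (0, 0))) (fun y IH => Nat.find (H (IH, y + 1))) i

theorem stg_computable {B C : ℕ → ℕ → Bool} (hB : Computable₂ B) (hC : Computable₂ C)
    (H : ∀ a : ℕ × ℕ, ∃ t, stgP B C a t = true) : Computable (stg B C H) := by
  have hF : Computable fun a : ℕ × ℕ => Nat.find (H a) :=
    computable_nat_find (stgP_computable hB hC) H
  have hh : Computable₂ fun (_ : ℕ) (z : ℕ × ℕ) => Nat.find (H (z.2, z.1 + 1)) :=
    hF.comp ((Computable.snd.comp Computable.snd).pair
      (Computable.succ.comp (Computable.fst.comp Computable.snd)))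
  exact (Computable.nat_rec Computable.id (Computable.const (Nat.find (H (0, 0)))) hh).of_eq
    fun a => rfl

theorem cf_mono_stage {c : ℕ → ℕ → ℚ} (hmc : MonotonicCF c) (x : ℕ) {a b : ℕ} (h : a ≤ b) :
    c x a ≤ c x b := by
  induction b, h using Nat.le_induction with
  | base => exact le_rfl
  | succ n hn ih => exact ih.trans (hmc.2.2 x n)

theorem cf_anti {c : ℕ → ℕ → ℚ} (hmc : MonotonicCF c) (s : ℕ) {y x : ℕ} (h : y ≤ x) :
    c x s ≤ c y s := by
  induction x, h using Nat.le_induction with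
  | base => exact le_rfl
  | succ n hn ih => exact (hmc.1 n s).trans ih

theorem stageCost_nonneg {c : ℕ → ℕ → ℚ} (hc : ∀ x s, 0 ≤ c x s) (B : ℕ → ℕ → Bool) (t : ℕ) :
    0 ≤ stageCost c B t := by
  unfold stageCost
  split
  · apply hc
  · exact le_rfl

theorem no_change_eq {B : ℕ → ℕ → Bool} {x u : ℕ} :
    ∀ v, u ≤ v → (∀ t, u < t → t ≤ v → B (t - 1) x = B t x) → B u x = B v x := by
  intro v
  induction v with
  | zero => intro h _; rcases Nat.le_zero.mp h with rfl; rfl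
  | succ v ih =>
    intro huv hcon
    rcases eq_or_lt_of_le huv with h | h
    · rw [h]
    · have hv : u ≤ v := Nat.lt_succ_iff.mp h
      have h1 := ih hv fun t ht1 ht2 => hcon t ht1 (ht2.trans (Nat.le_succ v))
      have h2 := hcon (v + 1) (Nat.lt_succ_of_le hv) le_rfl
      simp only [Nat.add_sub_cancel] at h2
      exact h1.trans h2

theorem exists_change {B : ℕ → ℕ → Bool} {x u v : ℕ} (huv : u ≤ v) (hne : B u x ≠ B v x) :
    ∃ t, u < t ∧ t ≤ v ∧ B (t - 1) x ≠ B t x := by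
  by_contra hcon
  push_neg at hcon
  exact hne (no_change_eq v huv hcon)

theorem cost_bound {c : ℕ → ℕ → ℚ} (hc : ∀ x s, 0 ≤ c x s) (hmc : MonotonicCF c)
    {B : ℕ → ℕ → Bool} {x j u v : ℕ} (hju : j ≤ u) (huv : u < v)
    (hxj : x ≤ j) (hne : B u x ≠ B v x) :
    c x (j + 1) ≤ ∑ t ∈ Finset.Ioc u v, stageCost c B t := by
  obtain ⟨t, ht1, ht2, htne⟩ := exists_change huv.le hne
  have hjt : j + 1 ≤ t := Nat.succ_le_of_lt (lt_of_le_of_lt hju ht1)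
  have hxt : x < t := lt_of_le_of_lt hxj (Nat.lt_of_succ_le hjt)
  have hch : ∃ y, y < t ∧ B (t - 1) y ≠ B t y := ⟨x, hxt, htne⟩
  have h1 : stageCost c B t = c (Nat.find hch) t := dif_pos hch
  have hfx : Nat.find hch ≤ x := Nat.find_min' hch ⟨hxt, htne⟩
  calc c x (j + 1) ≤ c x t := cf_mono_stage hmc x hjt
    _ ≤ c (Nat.find hch) t := cf_anti hmc t hfx
    _ = stageCost c B t := h1.symm
    _ ≤ _ := Finset.single_le_sum (fun i _ => stageCost_nonneg hc B i)
        (Finset.mem_Ioc.mpr ⟨ht1, ht2⟩)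

theorem sum_Ioc_stages {s : ℕ → ℕ} (hm : Monotone s) (f : ℕ → ℚ) (n : ℕ) :
    ∑ j ∈ Finset.range n, ∑ t ∈ Finset.Ioc (s j) (s (j + 1)), f t
      = ∑ t ∈ Finset.Ioc (s 0) (s n), f t := by
  induction n with
  | zero => simp
  | succ n ih =>
    rw [Finset.sum_range_succ, ih,
      Finset.sum_Ioc_consecutive _ (hm (Nat.zero_le n)) (hm (Nat.le_succ n))]

theorem exists_stgP {B C : ℕ → ℕ → Bool} {A : ℕ → Bool}
    (hB : ∀ x, ∃ N, ∀ s, N ≤ s → B s x = A x)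
    (hC : ∀ x, ∃ N, ∀ s, N ≤ s → C s x = A x) :
    ∀ a : ℕ × ℕ, ∃ t, stgP B C a t = true := by
  intro a
  choose f hf using hB
  choose g hg using hC
  set M := max (a.1 + 1) ((Finset.range (a.2 + 1)).sup fun x => max (f x) (g x)) with hM
  refine ⟨M, ?_⟩
  have h1 : a.1 < M := lt_of_lt_of_le (Nat.lt_succ_self _) (le_max_left _ _)
  have h2 : ∀ x ≤ a.2, B M x = C M x := by
    intro x hx
    have hxm : max (f x) (g x) ≤ M :=
      le_trans (Finset.le_sup (f := fun x => max (f x) (g x))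
        (Finset.mem_range.mpr (Nat.lt_succ_of_le hx))) (le_max_right _ _)
    rw [hf x M (le_trans (le_max_left _ _) hxm), hg x M (le_trans (le_max_right _ _) hxm)]
  rw [stgP, Bool.and_eq_true, agreeUp_eq_true]
  exact ⟨decide_eq_true h1, h2⟩

theorem obeys_add {c d : ℕ → ℕ → ℚ} (hc : IsCostFunction c) (hd : IsCostFunction d)
    (hmc : MonotonicCF c) (hmd : MonotonicCF d) {A : ℕ → Bool}
    (h1 : Obeys c A) (h2 : Obeys d A) : Obeys (fun x s => c x s + d x s) A := by
  obtain ⟨B, hB, q, hq⟩ := h1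
  obtain ⟨C, hC, r, hr⟩ := h2
  have H : ∀ a : ℕ × ℕ, ∃ t, stgP B C a t = true := exists_stgP hB.2.2 hC.2.2
  have hspec : ∀ a, stgP B C a (Nat.find (H a)) = true := fun a => Nat.find_spec (H a)
  have hlt : ∀ i, stg B C H i < stg B C H (i + 1) := by
    intro i
    have h := hspec (stg B C H i, i + 1)
    rw [stgP, Bool.and_eq_true] at h
    exact of_decide_eq_true h.1
  have hmono : Monotone (stg B C H) := monotone_nat_of_le_succ fun i => (hlt i).le
  have hige : ∀ i, i ≤ stg B C H i := by
    intro i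
    induction i with
    | zero => exact Nat.zero_le _
    | succ i ih => exact Nat.succ_le_of_lt (lt_of_le_of_lt ih (hlt i))
  have hagree : ∀ i x, x ≤ i → B (stg B C H i) x = C (stg B C H i) x := by
    intro i
    cases i with
    | zero =>
      have h := hspec (0, 0)
      rw [stgP, Bool.and_eq_true] at h
      exact agreeUp_eq_true.mp h.2
    | succ j =>
      have h := hspec (stg B C H j, j + 1)
      rw [stgP, Bool.and_eq_true] at h
      exact agreeUp_eq_true.mp h.2
  refine ⟨fun i x => B (stg B C H i) x, ⟨?_, fun i => hB.2.1 _, ?_⟩, q + r, ?_⟩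
  · exact hB.1.comp ((stg_computable hB.1 hC.1 H).comp Computable.fst) Computable.snd
  · intro x
    obtain ⟨N, hN⟩ := hB.2.2 x
    exact ⟨N, fun i hi => hN _ (le_trans hi (hige i))⟩
  · have hq0 : (0 : ℚ) ≤ q := by simpa using hq 0
    have hr0 : (0 : ℚ) ≤ r := by simpa using hr 0
    intro n
    cases n with
    | zero => simpa using add_nonneg hq0 hr0
    | succ m =>
      have hzero : stageCost (fun x s => c x s + d x s) (fun i x => B (stg B C H i) x) 0 = 0 := by
        rw [stageCost, dif_neg]
        rintro ⟨x, hx, -⟩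
        exact Nat.not_lt_zero x hx
      have key : ∀ j, stageCost (fun x s => c x s + d x s) (fun i x => B (stg B C H i) x) (j + 1) ≤
          (∑ t ∈ Finset.Ioc (stg B C H j) (stg B C H (j + 1)), stageCost c B t) +
          (∑ t ∈ Finset.Ioc (stg B C H j) (stg B C H (j + 1)), stageCost d C t) := by
        intro j
        rw [stageCost]
        split
        · next h =>
          obtain ⟨hxlt, hxne⟩ := Nat.find_spec h
          simp only [Nat.add_sub_cancel] at hxne
          have hxj : Nat.find h ≤ j := Nat.lt_succ_iff.mp hxlt
          have hBne : B (stg B C H j) (Nat.find h) ≠ B (stg B C H (j + 1)) (Nat.find h) := hxne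
          have hCne : C (stg B C H j) (Nat.find h) ≠ C (stg B C H (j + 1)) (Nat.find h) := by
            rw [← hagree j _ hxj, ← hagree (j + 1) _ (hxj.trans (Nat.le_succ j))]
            exact hBne
          exact add_le_add
            (cost_bound hc.2 hmc (hige j) (hlt j) hxj hBne)
            (cost_bound hd.2 hmd (hige j) (hlt j) hxj hCne)
        · next h =>
          exact add_nonneg (Finset.sum_nonneg fun t _ => stageCost_nonneg hc.2 B t)
            (Finset.sum_nonneg fun t _ => stageCost_nonneg hd.2 C t)
      have hsub : Finset.Ioc (stg B C H 0) (stg B C H m) ⊆ Finset.range (stg B C H m + 1) := by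
        intro t ht
        exact Finset.mem_range.mpr (Nat.lt_succ_of_le (Finset.mem_Ioc.mp ht).2)
      have hcq : ∑ t ∈ Finset.Ioc (stg B C H 0) (stg B C H m), stageCost c B t ≤ q :=
        le_trans (Finset.sum_le_sum_of_subset_of_nonneg hsub
          (fun t _ _ => stageCost_nonneg hc.2 B t)) (hq _)
      have hdr : ∑ t ∈ Finset.Ioc (stg B C H 0) (stg B C H m), stageCost d C t ≤ r :=
        le_trans (Finset.sum_le_sum_of_subset_of_nonneg hsub
          (fun t _ _ => stageCost_nonneg hd.2 C t)) (hr _)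
      calc ∑ s ∈ Finset.range (m + 1),
            stageCost (fun x s => c x s + d x s) (fun i x => B (stg B C H i) x) s
          = (∑ j ∈ Finset.range m,
              stageCost (fun x s => c x s + d x s) (fun i x => B (stg B C H i) x) (j + 1)) +
            stageCost (fun x s => c x s + d x s) (fun i x => B (stg B C H i) x) 0 :=
            Finset.sum_range_succ' _ m
        _ = ∑ j ∈ Finset.range m,
              stageCost (fun x s => c x s + d x s) (fun i x => B (stg B C H i) x) (j + 1) := by
            rw [hzero, add_zero]
        _ ≤ ∑ j ∈ Finset.range m,
              ((∑ t ∈ Finset.Ioc (stg B C H j) (stg B C H (j + 1)), stageCost c B t) +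
               (∑ t ∈ Finset.Ioc (stg B C H j) (stg B C H (j + 1)), stageCost d C t)) :=
            Finset.sum_le_sum fun j _ => key j
        _ = (∑ j ∈ Finset.range m, ∑ t ∈ Finset.Ioc (stg B C H j) (stg B C H (j + 1)),
              stageCost c B t) +
            (∑ j ∈ Finset.range m, ∑ t ∈ Finset.Ioc (stg B C H j) (stg B C H (j + 1)),
              stageCost d C t) := Finset.sum_add_distrib
        _ = (∑ t ∈ Finset.Ioc (stg B C H 0) (stg B C H m), stageCost c B t) +
            (∑ t ∈ Finset.Ioc (stg B C H 0) (stg B C H m), stageCost d C t) := by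
            rw [sum_Ioc_stages hmono, sum_Ioc_stages hmono]
        _ ≤ q + r := add_le_add hcq hdr

theorem stageCost_le_add {c d : ℕ → ℕ → ℚ} (hd0 : ∀ x s, 0 ≤ d x s)
    (E : ℕ → ℕ → Bool) (t : ℕ) :
    stageCost c E t ≤ stageCost (fun x s => c x s + d x s) E t := by
  by_cases hcond : ∃ x, x < t ∧ E (t - 1) x ≠ E t x
  · rw [stageCost, stageCost, dif_pos hcond, dif_pos hcond]
    exact le_add_of_nonneg_right (hd0 _ _)
  · rw [stageCost, stageCost, dif_neg hcond, dif_neg hcond]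

theorem stageCost_le_add' {c d : ℕ → ℕ → ℚ} (hc0 : ∀ x s, 0 ≤ c x s)
    (E : ℕ → ℕ → Bool) (t : ℕ) :
    stageCost d E t ≤ stageCost (fun x s => c x s + d x s) E t := by
  by_cases hcond : ∃ x, x < t ∧ E (t - 1) x ≠ E t x
  · rw [stageCost, stageCost, dif_pos hcond, dif_pos hcond]
    exact le_add_of_nonneg_left (hc0 _ _)
  · rw [stageCost, stageCost, dif_neg hcond, dif_neg hcond]

/-- For monotonic cost functions `c, d`, a Δ⁰₂ set obeys both
`c` and `d` iff it obeys `c + d`. -/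
theorem stmt11 (c d : ℕ → ℕ → ℚ) (hc : IsCostFunction c) (hd : IsCostFunction d)
    (hmc : MonotonicCF c) (hmd : MonotonicCF d) (A : ℕ → Bool)
    (hA : ∃ app, IsCompApprox app A) :
    (Obeys c A ∧ Obeys d A) ↔ Obeys (fun x s => c x s + d x s) A := by
  constructor
  · rintro ⟨h1, h2⟩
    exact obeys_add hc hd hmc hmd h1 h2
  · rintro ⟨E, hE, q, hq⟩
    refine ⟨⟨E, hE, q, fun n => ?_⟩, ⟨E, hE, q, fun n => ?_⟩⟩
    · exact le_trans (Finset.sum_le_sum fun t _ => stageCost_le_add hd.2 E t) (hq n)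
    · exact le_trans (Finset.sum_le_sum fun t _ => stageCost_le_add' hc.2 E t) (hq n)
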